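/- Let G be a finite simple connected graph, let u, v be vertices, and consider a GNN of depth r with ‖∇φ_l‖ ≤ α and max{‖∇ψ_l‖, 1} ≤ β for all l = 0,…,r−1. Then ‖∂h_u^{(r)}/∂x_v‖ ≤ (2αβ)^r · Σ_{l=0}^{r} (Â^l)_{uv}, where (Â^l)_{uv} is the (u,v) entry of the l-th power of the normalized adjacency matrix. -/

import Mathlib

open Matrix Finset

/-- The normalized adjacency matrix `Â = D^{-1/2} A D^{-1/2}` of a graph. -/
noncomputable def nadj {V : Type*} [Fintype V] [DecidableEq V] (G : SimpleGraph V)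
    [DecidableRel G.Adj] : Matrix V V ℝ :=
  Matrix.diagonal (fun v => (Real.sqrt (G.degree v))⁻¹) * G.adjMatrix ℝ *
    Matrix.diagonal (fun v => (Real.sqrt (G.degree v))⁻¹)

/-- The GNN iteration: `h⁰_v(X) = X v` and
`h^{l+1}_v(X) = φ_l (h^l_v(X), Σ_u Â_{uv} ψ_l (h^l_u(X)))`, where the sum over all `u` weighted
by `Â_{uv}` agrees with the sum over the neighborhood of `v` since `Â_{uv} = 0` otherwise.
Features live in Euclidean space (so operator norms are spectral norms), and the two arguments
of `φ_l` are paired with the `L²` product norm. -/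
noncomputable def gnn {V : Type*} [Fintype V] [DecidableEq V] (G : SimpleGraph V)
    [DecidableRel G.Adj] (d : ℕ)
    (φ : ℕ → WithLp 2 (EuclideanSpace ℝ (Fin d) × EuclideanSpace ℝ (Fin d)) →
      EuclideanSpace ℝ (Fin d))
    (ψ : ℕ → EuclideanSpace ℝ (Fin d) → EuclideanSpace ℝ (Fin d)) :
    ℕ → (V → EuclideanSpace ℝ (Fin d)) → V → EuclideanSpace ℝ (Fin d)
  | 0, X, v => X v
  | (l + 1), X, v =>
      φ l ((WithLp.equiv 2 _).symm
        (gnn G d φ ψ l X v, ∑ u : V, nadj G u v • ψ l (gnn G d φ ψ l X u)))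

section Aux

variable {V : Type*} [Fintype V] [DecidableEq V] (G : SimpleGraph V) [DecidableRel G.Adj]

lemma nadj_apply' (u v : V) :
    nadj G u v = (Real.sqrt (G.degree u))⁻¹ * (G.adjMatrix ℝ) u v *
      (Real.sqrt (G.degree v))⁻¹ := by
  rw [nadj, Matrix.mul_diagonal, Matrix.diagonal_mul]

lemma nadj_nonneg' (u v : V) : 0 ≤ nadj G u v := by
  rw [nadj_apply', SimpleGraph.adjMatrix_apply]
  split_ifs <;> positivity

lemma nadj_symm' (u v : V) : nadj G u v = nadj G v u := by
  have h : G.adjMatrix ℝ u v = G.adjMatrix ℝ v u := by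
    simp only [SimpleGraph.adjMatrix_apply]
    simp only [G.adj_comm u v]
  rw [nadj_apply', nadj_apply', h]
  ring

lemma nadj_pow_nonneg' (l : ℕ) (u v : V) : 0 ≤ (nadj G ^ l) u v := by
  induction l generalizing u v with
  | zero =>
    rw [pow_zero, Matrix.one_apply]
    split_ifs <;> norm_num
  | succ l ih =>
    rw [pow_succ, Matrix.mul_apply]
    exact Finset.sum_nonneg fun w _ => mul_nonneg (ih u w) (nadj_nonneg' G w v)

end Aux

lemma l2_pair_norm_le' {E F : Type*} [SeminormedAddCommGroup E] [SeminormedAddCommGroup F]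
    (a : E) (b : F) : ‖(WithLp.equiv 2 (E × F)).symm (a, b)‖ ≤ ‖a‖ + ‖b‖ := by
  rw [WithLp.prod_norm_eq_of_L2]
  have h1 : ((WithLp.equiv 2 (E × F)).symm (a, b)).fst = a := rfl
  have h2 : ((WithLp.equiv 2 (E × F)).symm (a, b)).snd = b := rfl
  rw [h1, h2, show ‖a‖ + ‖b‖ = Real.sqrt ((‖a‖ + ‖b‖) ^ 2) from
    (Real.sqrt_sq (by positivity)).symm]
  apply Real.sqrt_le_sqrt
  nlinarith [norm_nonneg a, norm_nonneg b]

/-- for a GNN of depth `r` with `‖∇φ_l‖ ≤ α` and `max {‖∇ψ_l‖, 1} ≤ β`,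
`‖∂h_u^{(r)}/∂x_v‖ ≤ (2αβ)^r · Σ_{l=0}^{r} (Â^l)_{uv}`. -/
theorem jacobian_bound_by_adj_powers {V : Type*} [Fintype V] [DecidableEq V]
    (G : SimpleGraph V) [DecidableRel G.Adj]
    (hconn : G.Connected) (hcard : 2 ≤ Fintype.card V)
    (d r : ℕ)
    (φ : ℕ → WithLp 2 (EuclideanSpace ℝ (Fin d) × EuclideanSpace ℝ (Fin d)) →
      EuclideanSpace ℝ (Fin d))
    (ψ : ℕ → EuclideanSpace ℝ (Fin d) → EuclideanSpace ℝ (Fin d))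
    (α β : ℝ)
    (hφdiff : ∀ l, ContDiff ℝ 1 (φ l))
    (hψdiff : ∀ l, ContDiff ℝ 1 (ψ l))
    (hφ : ∀ l p, ‖fderiv ℝ (φ l) p‖ ≤ α)
    (hψ : ∀ l p, ‖fderiv ℝ (ψ l) p‖ ≤ β)
    (hβ : 1 ≤ β)
    (X : V → EuclideanSpace ℝ (Fin d)) (u v : V) :
    ‖fderiv ℝ (fun y => gnn G d φ ψ r (Function.update X v y) u) (X v)‖ ≤
      (2 * α * β) ^ r * ∑ l ∈ Finset.range (r + 1), (nadj G ^ l) u v := by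
  classical
  have hα : 0 ≤ α := le_trans (norm_nonneg _) (hφ 0 0)
  have hβ0 : (0 : ℝ) ≤ β := le_trans zero_le_one hβ
  have hK : ∀ l : ℕ, (0 : ℝ) ≤ (2 * α * β) ^ l := fun l =>
    pow_nonneg (by positivity) l
  -- nonnegativity and monotonicity of the partial sums of powers
  have hS0 : ∀ (l : ℕ) (w : V), 0 ≤ ∑ j ∈ Finset.range (l + 1), (nadj G ^ j) w v :=
    fun l w => Finset.sum_nonneg fun j _ => nadj_pow_nonneg' G j w v
  have hSmono : ∀ (l : ℕ) (w : V),
      (∑ j ∈ Finset.range (l + 1), (nadj G ^ j) w v) ≤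
        ∑ j ∈ Finset.range (l + 2), (nadj G ^ j) w v := by
    intro l w
    rw [Finset.sum_range_succ (n := l + 1)]
    have := nadj_pow_nonneg' G (l + 1) w v
    linarith
  have hT : ∀ (l : ℕ) (w : V),
      (∑ w' : V, nadj G w' w * ∑ j ∈ Finset.range (l + 1), (nadj G ^ j) w' v) ≤
        ∑ j ∈ Finset.range (l + 2), (nadj G ^ j) w v := by
    intro l w
    have heq : (∑ w' : V, nadj G w' w * ∑ j ∈ Finset.range (l + 1), (nadj G ^ j) w' v) =
        ∑ j ∈ Finset.range (l + 1), (nadj G ^ (j + 1)) w v := by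
      simp_rw [Finset.mul_sum]
      rw [Finset.sum_comm]
      refine Finset.sum_congr rfl fun j _ => ?_
      rw [pow_succ' (nadj G) j, Matrix.mul_apply]
      refine Finset.sum_congr rfl fun w' _ => ?_
      rw [nadj_symm' G w' w]
    rw [heq, Finset.sum_range_succ' (fun j => (nadj G ^ j) w v) (l + 1)]
    have := nadj_pow_nonneg' G 0 w v
    linarith
  have hT0 : ∀ (l : ℕ) (w : V),
      0 ≤ ∑ w' : V, nadj G w' w * ∑ j ∈ Finset.range (l + 1), (nadj G ^ j) w' v :=
    fun l w => Finset.sum_nonneg fun w' _ => mul_nonneg (nadj_nonneg' G w' w) (hS0 l w')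
  -- the key induction
  have key : ∀ l : ℕ, ∀ w : V, ∀ y : EuclideanSpace ℝ (Fin d),
      ∃ L : EuclideanSpace ℝ (Fin d) →L[ℝ] EuclideanSpace ℝ (Fin d),
        HasFDerivAt (fun y : EuclideanSpace ℝ (Fin d) => gnn G d φ ψ l (Function.update X v y) w) L y ∧
        ‖L‖ ≤ (2 * α * β) ^ l * ∑ j ∈ Finset.range (l + 1), (nadj G ^ j) w v := by
    intro l
    induction l with
    | zero =>
      intro w y
      rcases eq_or_ne w v with h | h
      · subst h
        refine ⟨ContinuousLinearMap.id ℝ (EuclideanSpace ℝ (Fin d)), ?_, ?_⟩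
        · have hfe : (fun y : EuclideanSpace ℝ (Fin d) => gnn G d φ ψ 0 (Function.update X w y) w) = id := by
            funext z
            simp [gnn]
          rw [hfe]
          exact hasFDerivAt_id y
        · have hzz : (2 * α * β) ^ 0 * ∑ j ∈ Finset.range (0 + 1), (nadj G ^ j) w w = 1 := by
            simp [Matrix.one_apply_eq]
          rw [hzz]
          exact ContinuousLinearMap.norm_id_le
      · refine ⟨0, ?_, ?_⟩
        · have hfe : (fun y : EuclideanSpace ℝ (Fin d) => gnn G d φ ψ 0 (Function.update X v y) w) =
              fun _ => X w := by
            funext z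
            simp [gnn, Function.update_of_ne h]
          rw [hfe]
          exact hasFDerivAt_const _ _
        · have hzz : (2 * α * β) ^ 0 * ∑ j ∈ Finset.range (0 + 1), (nadj G ^ j) w v = 0 := by
            simp [Matrix.one_apply_ne h]
          rw [hzz, norm_zero]
    | succ l ih =>
      intro w y
      choose L hL hLn using fun w' => ih w' y
      have hψd : Differentiable ℝ (ψ l) := (hψdiff l).differentiable one_ne_zero
      have hφd : Differentiable ℝ (φ l) := (hφdiff l).differentiable one_ne_zero
      set f : V → EuclideanSpace ℝ (Fin d) → EuclideanSpace ℝ (Fin d) := fun w' y => gnn G d φ ψ l (Function.update X v y) w' with hf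
      -- derivative of each summand
      have hterm : ∀ w' : V,
          HasFDerivAt (fun y : EuclideanSpace ℝ (Fin d) => nadj G w' w • ψ l (f w' y))
            (nadj G w' w • ((fderiv ℝ (ψ l) (f w' y)).comp (L w'))) y :=
        fun w' => by have := (((hψd (f w' y)).hasFDerivAt).comp y (hL w')).const_smul (nadj G w' w); exact this
      have hsum : HasFDerivAt (fun y : EuclideanSpace ℝ (Fin d) => ∑ w' : V, nadj G w' w • ψ l (f w' y))
          (∑ w' : V, nadj G w' w • ((fderiv ℝ (ψ l) (f w' y)).comp (L w'))) y :=
        HasFDerivAt.fun_sum fun w' _ => hterm w'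
      set Q : EuclideanSpace ℝ (Fin d) →L[ℝ] EuclideanSpace ℝ (Fin d) :=
        ∑ w' : V, nadj G w' w • ((fderiv ℝ (ψ l) (f w' y)).comp (L w')) with hQ
      have hpair : HasFDerivAt (fun y : EuclideanSpace ℝ (Fin d) => (f w y, ∑ w' : V, nadj G w' w • ψ l (f w' y)))
          ((L w).prod Q) y := (hL w).prodMk hsum
      set e : WithLp 2 (EuclideanSpace ℝ (Fin d) × EuclideanSpace ℝ (Fin d)) ≃L[ℝ] EuclideanSpace ℝ (Fin d) × EuclideanSpace ℝ (Fin d) := WithLp.prodContinuousLinearEquiv 2 ℝ (EuclideanSpace ℝ (Fin d)) (EuclideanSpace ℝ (Fin d)) with he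
      have hmid : HasFDerivAt
          (fun y : EuclideanSpace ℝ (Fin d) => (WithLp.equiv 2 (EuclideanSpace ℝ (Fin d) × EuclideanSpace ℝ (Fin d))).symm
            (f w y, ∑ w' : V, nadj G w' w • ψ l (f w' y)))
          ((e.symm : (EuclideanSpace ℝ (Fin d) × EuclideanSpace ℝ (Fin d)) →L[ℝ] WithLp 2 (EuclideanSpace ℝ (Fin d) × EuclideanSpace ℝ (Fin d))).comp ((L w).prod Q)) y :=
        ((e.symm : (EuclideanSpace ℝ (Fin d) × EuclideanSpace ℝ (Fin d)) →L[ℝ] WithLp 2 (EuclideanSpace ℝ (Fin d) × EuclideanSpace ℝ (Fin d))).hasFDerivAt).comp y hpair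
      set Z : WithLp 2 (EuclideanSpace ℝ (Fin d) × EuclideanSpace ℝ (Fin d)) := (WithLp.equiv 2 (EuclideanSpace ℝ (Fin d) × EuclideanSpace ℝ (Fin d))).symm
        (f w y, ∑ w' : V, nadj G w' w • ψ l (f w' y)) with hZ
      have hfull : HasFDerivAt
          (fun y : EuclideanSpace ℝ (Fin d) => gnn G d φ ψ (l + 1) (Function.update X v y) w)
          ((fderiv ℝ (φ l) Z).comp
            ((e.symm : (EuclideanSpace ℝ (Fin d) × EuclideanSpace ℝ (Fin d)) →L[ℝ] WithLp 2 (EuclideanSpace ℝ (Fin d) × EuclideanSpace ℝ (Fin d))).comp ((L w).prod Q))) y := by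
        have := ((hφd Z).hasFDerivAt).comp y hmid
        exact this
      refine ⟨_, hfull, ?_⟩
      -- norm estimates
      have hQn : ‖Q‖ ≤ β * ((2 * α * β) ^ l *
          ∑ w' : V, nadj G w' w * ∑ j ∈ Finset.range (l + 1), (nadj G ^ j) w' v) := by
        calc ‖Q‖ ≤ ∑ w' : V, ‖nadj G w' w • ((fderiv ℝ (ψ l) (f w' y)).comp (L w'))‖ :=
              norm_sum_le _ _
          _ ≤ ∑ w' : V, nadj G w' w *
              (β * ((2 * α * β) ^ l * ∑ j ∈ Finset.range (l + 1), (nadj G ^ j) w' v)) := by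
            refine Finset.sum_le_sum fun w' _ => ?_
            rw [norm_smul (nadj G w' w) ((fderiv ℝ (ψ l) (f w' y)).comp (L w')), Real.norm_eq_abs,
              abs_of_nonneg (nadj_nonneg' G w' w)]
            refine mul_le_mul_of_nonneg_left ?_ (nadj_nonneg' G w' w)
            calc ‖(fderiv ℝ (ψ l) (f w' y)).comp (L w')‖ ≤
                  ‖fderiv ℝ (ψ l) (f w' y)‖ * ‖L w'‖ := ContinuousLinearMap.opNorm_comp_le _ _
              _ ≤ β * ((2 * α * β) ^ l *
                  ∑ j ∈ Finset.range (l + 1), (nadj G ^ j) w' v) :=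
                mul_le_mul (hψ l _) (hLn w') (norm_nonneg _) hβ0
          _ = β * ((2 * α * β) ^ l *
              ∑ w' : V, nadj G w' w * ∑ j ∈ Finset.range (l + 1), (nadj G ^ j) w' v) := by
            rw [Finset.mul_sum, Finset.mul_sum]
            refine Finset.sum_congr rfl fun w' _ => ?_
            ring
      have hEsym : ‖(e.symm : (EuclideanSpace ℝ (Fin d) × EuclideanSpace ℝ (Fin d)) →L[ℝ] WithLp 2 (EuclideanSpace ℝ (Fin d) × EuclideanSpace ℝ (Fin d))).comp ((L w).prod Q)‖ ≤
          ‖L w‖ + ‖Q‖ := by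
        refine ContinuousLinearMap.opNorm_le_bound _ (by positivity) fun x => ?_
        have hx : ((e.symm : (EuclideanSpace ℝ (Fin d) × EuclideanSpace ℝ (Fin d)) →L[ℝ] WithLp 2 (EuclideanSpace ℝ (Fin d) × EuclideanSpace ℝ (Fin d))).comp ((L w).prod Q)) x =
            (WithLp.equiv 2 (EuclideanSpace ℝ (Fin d) × EuclideanSpace ℝ (Fin d))).symm (L w x, Q x) := rfl
        rw [hx]
        calc ‖(WithLp.equiv 2 (EuclideanSpace ℝ (Fin d) × EuclideanSpace ℝ (Fin d))).symm (L w x, Q x)‖ ≤ ‖L w x‖ + ‖Q x‖ :=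
              l2_pair_norm_le' _ _
          _ ≤ ‖L w‖ * ‖x‖ + ‖Q‖ * ‖x‖ :=
              add_le_add ((L w).le_opNorm x) (Q.le_opNorm x)
          _ = (‖L w‖ + ‖Q‖) * ‖x‖ := by ring
      -- combine
      set Sl : ℝ := ∑ j ∈ Finset.range (l + 1), (nadj G ^ j) w v with hSl
      set Sl1 : ℝ := ∑ j ∈ Finset.range (l + 2), (nadj G ^ j) w v with hSl1
      set T : ℝ := ∑ w' : V, nadj G w' w * ∑ j ∈ Finset.range (l + 1), (nadj G ^ j) w' v
        with hTd
      have h1 : ‖(fderiv ℝ (φ l) Z).comp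
          ((e.symm : (EuclideanSpace ℝ (Fin d) × EuclideanSpace ℝ (Fin d)) →L[ℝ] WithLp 2 (EuclideanSpace ℝ (Fin d) × EuclideanSpace ℝ (Fin d))).comp ((L w).prod Q))‖ ≤
          α * (‖L w‖ + ‖Q‖) := by
        calc ‖(fderiv ℝ (φ l) Z).comp _‖ ≤ ‖fderiv ℝ (φ l) Z‖ * ‖_‖ :=
              ContinuousLinearMap.opNorm_comp_le _ _
          _ ≤ α * (‖L w‖ + ‖Q‖) :=
              mul_le_mul (hφ l Z) hEsym (norm_nonneg _) hα
      have h2 : ‖L w‖ + ‖Q‖ ≤ (2 * α * β) ^ l * Sl + β * ((2 * α * β) ^ l * T) :=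
        add_le_add (hLn w) hQn
      have h3 : (2 * α * β) ^ l * Sl + β * ((2 * α * β) ^ l * T) ≤
          2 * β * ((2 * α * β) ^ l * Sl1) := by
        have hb1 : (2 * α * β) ^ l * Sl ≤ β * ((2 * α * β) ^ l * Sl1) := by
          have hbb : (2 * α * β) ^ l * Sl ≤ (2 * α * β) ^ l * Sl1 :=
            mul_le_mul_of_nonneg_left (hSmono l w) (hK l)
          have hle : (2 * α * β) ^ l * Sl1 ≤ β * ((2 * α * β) ^ l * Sl1) := by
            nlinarith [mul_nonneg (hK l) (hS0 (l + 1) w)]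
          linarith
        have hb2 : β * ((2 * α * β) ^ l * T) ≤ β * ((2 * α * β) ^ l * Sl1) :=
          mul_le_mul_of_nonneg_left (mul_le_mul_of_nonneg_left (hT l w) (hK l)) hβ0
        linarith
      calc ‖(fderiv ℝ (φ l) Z).comp
            ((e.symm : (EuclideanSpace ℝ (Fin d) × EuclideanSpace ℝ (Fin d)) →L[ℝ] WithLp 2 (EuclideanSpace ℝ (Fin d) × EuclideanSpace ℝ (Fin d))).comp ((L w).prod Q))‖ ≤
            α * (‖L w‖ + ‖Q‖) := h1
        _ ≤ α * (2 * β * ((2 * α * β) ^ l * Sl1)) := by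
            refine mul_le_mul_of_nonneg_left (le_trans h2 h3) hα
        _ = (2 * α * β) ^ (l + 1) * Sl1 := by
            rw [pow_succ]
            ring
  obtain ⟨L, hL, hb⟩ := key r u (X v)
  rw [hL.fderiv]
  exact hb
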